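/- Let μ be an m-increasing Borel probability measure on [0,1) (i.e. m(I) ≤ C m(Î) for all dyadic intervals I, where Î is the dyadic parent). Then there exists a constant C' > 0 such that for every martingale jump w with respect to some n (w is F_n-measurable, E_{n−1}(w) = 0), the dyadic Hilbert transform H_D(w) = Σ_{I ∈ A(F_n)} δ(I) ⟨w, h_Î⟩ h_I satisfies ‖H_D(w)‖_{L¹(μ)} ≤ C' ‖w‖_{L¹(μ)}. -/

import Mathlib

open MeasureTheory ENNReal

/-- The dyadic interval `[k/2^n, (k+1)/2^n)`. -/
def dyadicI (n k : ℕ) : Set ℝ := Set.Ico ((k : ℝ) / 2 ^ n) (((k : ℝ) + 1) / 2 ^ n)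

/-- The σ-algebra on `[0,1)` generated by the dyadic intervals of generation `n`. -/
def dyadicF (n : ℕ) : MeasurableSpace ℝ :=
  MeasurableSpace.generateFrom {s | ∃ k < 2 ^ n, s = dyadicI n k}

/-- `m(I) = μ(I₋)μ(I₊)/μ(I)` for `I = dyadicI n k`. -/
noncomputable def mval (μ : Measure ℝ) (n k : ℕ) : ℝ :=
  (μ (dyadicI (n + 1) (2 * k))).toReal * (μ (dyadicI (n + 1) (2 * k + 1))).toReal
    / (μ (dyadicI n k)).toReal

/-- The Haar-type function `h_I` for `I = dyadicI n k`. -/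
noncomputable def haarFn (μ : Measure ℝ) (n k : ℕ) : ℝ → ℝ := fun x =>
  Real.sqrt (mval μ n k) *
    ((dyadicI (n + 1) (2 * k)).indicator
        (fun _ => ((μ (dyadicI (n + 1) (2 * k))).toReal)⁻¹) x
      - (dyadicI (n + 1) (2 * k + 1)).indicator
        (fun _ => ((μ (dyadicI (n + 1) (2 * k + 1))).toReal)⁻¹) x)

lemma dyadicI_meas (n k : ℕ) : MeasurableSet (dyadicI n k) := measurableSet_Ico

lemma dyadicI_left_subset (n k : ℕ) : dyadicI (n+1) (2*k) ⊆ dyadicI n k := by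
  apply Set.Ico_subset_Ico
  · rw [div_le_div_iff₀ (by positivity) (by positivity)]
    push_cast; ring_nf; nlinarith [pow_pos (show (0:ℝ) < 2 by norm_num) n]
  · rw [div_le_div_iff₀ (by positivity) (by positivity)]
    push_cast; ring_nf; nlinarith [pow_pos (show (0:ℝ) < 2 by norm_num) n]

lemma dyadicI_right_subset (n k : ℕ) : dyadicI (n+1) (2*k+1) ⊆ dyadicI n k := by
  apply Set.Ico_subset_Ico
  · rw [div_le_div_iff₀ (by positivity) (by positivity)]
    push_cast; ring_nf; nlinarith [pow_pos (show (0:ℝ) < 2 by norm_num) n]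
  · rw [div_le_div_iff₀ (by positivity) (by positivity)]
    push_cast; ring_nf; nlinarith [pow_pos (show (0:ℝ) < 2 by norm_num) n]

lemma dyadicI_disjoint (n : ℕ) {j j' : ℕ} (h : j ≠ j') :
    Disjoint (dyadicI n j) (dyadicI n j') := by
  rcases h.lt_or_gt with hlt | hlt
  · rw [dyadicI, dyadicI, Set.Ico_disjoint_Ico]
    refine le_trans (min_le_left _ _) (le_trans ?_ (le_max_right _ _))
    apply div_le_div_of_nonneg_right ?_ (by positivity)
    exact_mod_cast hlt
  · rw [dyadicI, dyadicI, Set.Ico_disjoint_Ico]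
    refine le_trans (min_le_right _ _) (le_trans ?_ (le_max_left _ _))
    apply div_le_div_of_nonneg_right ?_ (by positivity)
    exact_mod_cast hlt

lemma haarFn_measurable (μ : Measure ℝ) (n k : ℕ) : Measurable (haarFn μ n k) :=
  Measurable.const_mul ((measurable_const.indicator (dyadicI_meas _ _)).sub
    (measurable_const.indicator (dyadicI_meas _ _))) _

lemma haarFn_integrable (μ : Measure ℝ) [IsFiniteMeasure μ] (n k : ℕ) :
    Integrable (haarFn μ n k) μ := by
  apply Integrable.const_mul
  exact ((integrable_const _).indicator (dyadicI_meas _ _)).sub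
    ((integrable_const _).indicator (dyadicI_meas _ _))

lemma haarFn_abs_le (μ : Measure ℝ) [IsFiniteMeasure μ] (n k : ℕ)
    (hI : 0 < (μ (dyadicI n k)).toReal)
    (hL : 0 < (μ (dyadicI (n+1) (2*k))).toReal)
    (hR : 0 < (μ (dyadicI (n+1) (2*k+1))).toReal) (x : ℝ) :
    |haarFn μ n k x| ≤
      (Real.sqrt (mval μ n k))⁻¹ * (dyadicI n k).indicator (fun _ => (1:ℝ)) x := by
  set a := (μ (dyadicI (n+1) (2*k))).toReal with ha
  set b := (μ (dyadicI (n+1) (2*k+1))).toReal with hb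
  set c := (μ (dyadicI n k)).toReal with hc
  have hm : 0 < mval μ n k := by rw [mval]; positivity
  have hac : a ≤ c := by
    apply ENNReal.toReal_mono (measure_ne_top μ _)
    exact measure_mono (dyadicI_left_subset n k)
  have hbc : b ≤ c := by
    apply ENNReal.toReal_mono (measure_ne_top μ _)
    exact measure_mono (dyadicI_right_subset n k)
  have hsq : Real.sqrt (mval μ n k) * Real.sqrt (mval μ n k) = mval μ n k :=
    Real.mul_self_sqrt hm.le
  have hsqpos : 0 < Real.sqrt (mval μ n k) := Real.sqrt_pos.mpr hm
  by_cases hxL : x ∈ dyadicI (n+1) (2*k)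
  · have hxR : x ∉ dyadicI (n+1) (2*k+1) :=
      Set.disjoint_left.mp (dyadicI_disjoint (n+1) (by omega)) hxL
    have hxI : x ∈ dyadicI n k := dyadicI_left_subset n k hxL
    rw [haarFn]
    simp only [Set.indicator_of_mem hxL, Set.indicator_of_notMem hxR,
      Set.indicator_of_mem hxI, sub_zero, mul_one, ← ha]
    rw [abs_of_nonneg (by positivity)]
    have hma : mval μ n k ≤ a := by
      rw [mval, div_le_iff₀ hI]
      nlinarith
    have key : Real.sqrt (mval μ n k) * Real.sqrt (mval μ n k) ≤ a := by rw [hsq]; exact hma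
    calc Real.sqrt (mval μ n k) * a⁻¹
        = (Real.sqrt (mval μ n k) * Real.sqrt (mval μ n k)) *
            ((Real.sqrt (mval μ n k))⁻¹ * a⁻¹) := by
          rw [mul_mul_mul_comm, mul_inv_cancel₀ hsqpos.ne', one_mul]
      _ ≤ a * ((Real.sqrt (mval μ n k))⁻¹ * a⁻¹) :=
          mul_le_mul_of_nonneg_right key (by positivity)
      _ = (Real.sqrt (mval μ n k))⁻¹ := by field_simp
  · by_cases hxR : x ∈ dyadicI (n+1) (2*k+1)
    · have hxI : x ∈ dyadicI n k := dyadicI_right_subset n k hxR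
      rw [haarFn]
      simp only [Set.indicator_of_mem hxR, Set.indicator_of_notMem hxL,
        Set.indicator_of_mem hxI, zero_sub, mul_one, ← hb]
      rw [abs_mul, abs_of_nonneg (Real.sqrt_nonneg _), abs_neg, abs_of_nonneg (by positivity)]
      have hmb : mval μ n k ≤ b := by
        rw [mval, div_le_iff₀ hI]
        nlinarith
      have key : Real.sqrt (mval μ n k) * Real.sqrt (mval μ n k) ≤ b := by rw [hsq]; exact hmb
      calc Real.sqrt (mval μ n k) * b⁻¹
          = (Real.sqrt (mval μ n k) * Real.sqrt (mval μ n k)) *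
              ((Real.sqrt (mval μ n k))⁻¹ * b⁻¹) := by
            rw [mul_mul_mul_comm, mul_inv_cancel₀ hsqpos.ne', one_mul]
        _ ≤ b * ((Real.sqrt (mval μ n k))⁻¹ * b⁻¹) :=
            mul_le_mul_of_nonneg_right key (by positivity)
        _ = (Real.sqrt (mval μ n k))⁻¹ := by field_simp
    · rw [haarFn]
      simp only [Set.indicator_of_notMem hxL, Set.indicator_of_notMem hxR, sub_zero,
        mul_zero, sub_self, abs_zero]
      exact mul_nonneg (by positivity) (Set.indicator_nonneg (fun _ _ => zero_le_one) x)

lemma haarFn_L1 (μ : Measure ℝ) [IsFiniteMeasure μ] (n k : ℕ)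
    (hL : 0 < (μ (dyadicI (n+1) (2*k))).toReal)
    (hR : 0 < (μ (dyadicI (n+1) (2*k+1))).toReal) :
    ∫ x, |haarFn μ n k x| ∂μ ≤ 2 * Real.sqrt (mval μ n k) := by
  set a := (μ (dyadicI (n+1) (2*k))).toReal with ha
  set b := (μ (dyadicI (n+1) (2*k+1))).toReal with hb
  have hbound : ∀ x, |haarFn μ n k x| ≤
      Real.sqrt (mval μ n k) *
        ((dyadicI (n+1) (2*k)).indicator (fun _ => a⁻¹) x
          + (dyadicI (n+1) (2*k+1)).indicator (fun _ => b⁻¹) x) := by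
    intro x
    rw [haarFn, abs_mul, abs_of_nonneg (Real.sqrt_nonneg _)]
    apply mul_le_mul_of_nonneg_left _ (Real.sqrt_nonneg _)
    refine le_trans (abs_sub _ _) ?_
    gcongr
    · rw [abs_of_nonneg (Set.indicator_nonneg (fun _ _ => by positivity) x)]
    · rw [abs_of_nonneg (Set.indicator_nonneg (fun _ _ => by positivity) x)]
  have hint : Integrable (fun x => Real.sqrt (mval μ n k) *
      ((dyadicI (n+1) (2*k)).indicator (fun _ => a⁻¹) x
        + (dyadicI (n+1) (2*k+1)).indicator (fun _ => b⁻¹) x)) μ := by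
    apply Integrable.const_mul
    exact ((integrable_const _).indicator (dyadicI_meas _ _)).add
      ((integrable_const _).indicator (dyadicI_meas _ _))
  calc ∫ x, |haarFn μ n k x| ∂μ
      ≤ ∫ x, Real.sqrt (mval μ n k) *
          ((dyadicI (n+1) (2*k)).indicator (fun _ => a⁻¹) x
            + (dyadicI (n+1) (2*k+1)).indicator (fun _ => b⁻¹) x) ∂μ :=
        integral_mono (haarFn_integrable μ n k).abs hint hbound
    _ = Real.sqrt (mval μ n k) *
          ((∫ x, (dyadicI (n+1) (2*k)).indicator (fun _ => a⁻¹) x ∂μ)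
            + ∫ x, (dyadicI (n+1) (2*k+1)).indicator (fun _ => b⁻¹) x ∂μ) := by
        rw [integral_const_mul, integral_add
          ((integrable_const _).indicator (dyadicI_meas _ _))
          ((integrable_const _).indicator (dyadicI_meas _ _))]
    _ = 2 * Real.sqrt (mval μ n k) := by
        rw [integral_indicator_const _ (dyadicI_meas _ _),
          integral_indicator_const _ (dyadicI_meas _ _)]
        rw [smul_eq_mul, smul_eq_mul, measureReal_def, measureReal_def, ← ha, ← hb,
          mul_inv_cancel₀ hL.ne', mul_inv_cancel₀ hR.ne']
        ring

lemma coef_bound (μ : Measure ℝ) [IsFiniteMeasure μ] (n k : ℕ) (w : ℝ → ℝ)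
    (hw : Integrable w μ)
    (hI : 0 < (μ (dyadicI n k)).toReal)
    (hL : 0 < (μ (dyadicI (n+1) (2*k))).toReal)
    (hR : 0 < (μ (dyadicI (n+1) (2*k+1))).toReal)
    (habs : ∀ x, |haarFn μ n k x| ≤
      (Real.sqrt (mval μ n k))⁻¹ * (dyadicI n k).indicator (fun _ => (1:ℝ)) x) :
    |∫ y, w y * haarFn μ n k y ∂μ| ≤
      (Real.sqrt (mval μ n k))⁻¹ * ∫ y in dyadicI n k, |w y| ∂μ := by
  have hm : 0 < mval μ n k := by rw [mval]; positivity
  have hsqpos : 0 < Real.sqrt (mval μ n k) := Real.sqrt_pos.mpr hm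
  have hbd : ∀ y, ‖haarFn μ n k y‖ ≤ (Real.sqrt (mval μ n k))⁻¹ := by
    intro y
    refine (habs y).trans ?_
    have h1 : (dyadicI n k).indicator (fun _ => (1:ℝ)) y ≤ 1 :=
      Set.indicator_apply_le' (fun _ => le_rfl) (fun _ => zero_le_one)
    nlinarith [inv_nonneg.mpr hsqpos.le]
  have hint : Integrable (fun y => w y * haarFn μ n k y) μ := by
    have := Integrable.bdd_mul hw (haarFn_measurable μ n k).aestronglyMeasurable
      (c := (Real.sqrt (mval μ n k))⁻¹) (Filter.Eventually.of_forall hbd)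
    simpa [mul_comm] using this
  have hgint : Integrable (fun y =>
      (Real.sqrt (mval μ n k))⁻¹ * (dyadicI n k).indicator (fun z => |w z|) y) μ :=
    ((hw.abs.indicator (dyadicI_meas n k)).const_mul _)
  calc |∫ y, w y * haarFn μ n k y ∂μ|
      ≤ ∫ y, |w y * haarFn μ n k y| ∂μ := by
        simpa only [Real.norm_eq_abs] using
          norm_integral_le_integral_norm (fun y => w y * haarFn μ n k y)
    _ ≤ ∫ y, (Real.sqrt (mval μ n k))⁻¹ * (dyadicI n k).indicator (fun z => |w z|) y ∂μ := by
        apply integral_mono hint.abs hgint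
        intro y
        simp only []
        by_cases hy : y ∈ dyadicI n k
        · show |w y * haarFn μ n k y| ≤ _
          rw [Set.indicator_of_mem hy]
          rw [abs_mul]
          rw [mul_comm ((Real.sqrt (mval μ n k))⁻¹) |w y|]
          apply mul_le_mul_of_nonneg_left _ (abs_nonneg _)
          exact hbd y
        · show |w y * haarFn μ n k y| ≤ _
          rw [Set.indicator_of_notMem hy]
          have h0 : |haarFn μ n k y| ≤ 0 := by
            have := habs y
            rwa [Set.indicator_of_notMem hy, mul_zero] at this
          rw [abs_mul, le_antisymm h0 (abs_nonneg _), mul_zero, mul_zero]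
    _ = (Real.sqrt (mval μ n k))⁻¹ * ∫ y in dyadicI n k, |w y| ∂μ := by
        rw [integral_const_mul, integral_indicator (dyadicI_meas n k)]

lemma sum_halve (m : ℕ) (g : ℕ → ℝ) :
    ∑ k ∈ Finset.range (2 * m), g (k / 2) = 2 * ∑ j ∈ Finset.range m, g j := by
  induction m with
  | zero => simp
  | succ m ih =>
    have h2 : 2 * (m + 1) = 2 * m + 1 + 1 := by ring
    rw [h2, Finset.sum_range_succ, Finset.sum_range_succ, ih, Finset.sum_range_succ]
    have e1 : (2 * m) / 2 = m := by omega
    have e2 : (2 * m + 1) / 2 = m := by omega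
    rw [e1, e2]; ring

lemma sum_setIntegral_le (μ : Measure ℝ) [IsFiniteMeasure μ] (p N : ℕ) (w : ℝ → ℝ)
    (hw : Integrable w μ) :
    ∑ j ∈ Finset.range N, ∫ x in dyadicI p j, |w x| ∂μ ≤ ∫ x, |w x| ∂μ := by
  rw [← integral_biUnion_finset (Finset.range N) (fun i _ => dyadicI_meas p i)
    (fun i _ j _ hij => dyadicI_disjoint p hij) (fun i _ => hw.abs.integrableOn)]
  exact setIntegral_le_integral hw.abs (Filter.Eventually.of_forall fun x => abs_nonneg _)

theorem dyadic_Hilbert_jump_L1 (μ : Measure ℝ) [IsProbabilityMeasure μ]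
    (hsupp : μ (Set.Ico (0 : ℝ) 1) = 1)
    (hpos : ∀ n k : ℕ, k < 2 ^ n → 0 < μ (dyadicI n k))
    (C : ℝ) (hC : 0 < C)
    (hincr : ∀ n k : ℕ, k < 2 ^ (n + 1) → mval μ (n + 1) k ≤ C * mval μ n (k / 2)) :
    ∃ C' : ℝ, 0 < C' ∧
      ∀ (n : ℕ) (w : ℝ → ℝ), 1 ≤ n → Integrable w μ →
        StronglyMeasurable[dyadicF n] w → (μ[w | dyadicF (n - 1)]) =ᵐ[μ] 0 →
        ∫ x, |∑ k ∈ Finset.range (2 ^ n),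
            (if k % 2 = 0 then (1 : ℝ) else -1)
              * (∫ y, w y * haarFn μ (n - 1) (k / 2) y ∂μ) * haarFn μ n k x| ∂μ
          ≤ C' * ∫ x, |w x| ∂μ := by
  have hposR : ∀ n k : ℕ, k < 2 ^ n → 0 < (μ (dyadicI n k)).toReal := fun n k hk =>
    ENNReal.toReal_pos (hpos n k hk).ne' (measure_ne_top μ _)
  refine ⟨4 * Real.sqrt C, by positivity, ?_⟩
  rintro n w hn hw - -
  obtain ⟨m, rfl⟩ : ∃ m, n = m + 1 := ⟨n - 1, by omega⟩
  have hm1 : m + 1 - 1 = m := rfl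
  rw [hm1]
  set c : ℕ → ℝ := fun k => (if k % 2 = 0 then (1 : ℝ) else -1)
    * (∫ y, w y * haarFn μ m (k / 2) y ∂μ) with hc
  -- positivity facts for indices
  have hdiv : ∀ k, k < 2 ^ (m + 1) → k / 2 < 2 ^ m := by
    intro k hk
    have : 2 ^ (m + 1) = 2 ^ m * 2 := by rw [pow_succ]
    omega
  -- step 1 : ∫ |Σ| ≤ Σ |c k| ∫ |h k|
  have hintk : ∀ k, Integrable (fun x => c k * haarFn μ (m+1) k x) μ :=
    fun k => (haarFn_integrable μ (m+1) k).const_mul _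
  have step1 : ∫ x, |∑ k ∈ Finset.range (2 ^ (m+1)), c k * haarFn μ (m+1) k x| ∂μ
      ≤ ∑ k ∈ Finset.range (2 ^ (m+1)), |c k| * ∫ x, |haarFn μ (m+1) k x| ∂μ := by
    calc ∫ x, |∑ k ∈ Finset.range (2 ^ (m+1)), c k * haarFn μ (m+1) k x| ∂μ
        ≤ ∫ x, ∑ k ∈ Finset.range (2 ^ (m+1)), |c k * haarFn μ (m+1) k x| ∂μ := by
          apply integral_mono
          · exact (integrable_finset_sum _ fun k _ => hintk k).abs
          · exact integrable_finset_sum _ fun k _ => (hintk k).abs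
          · exact fun x => Finset.abs_sum_le_sum_abs _ _
      _ = ∑ k ∈ Finset.range (2 ^ (m+1)), ∫ x, |c k * haarFn μ (m+1) k x| ∂μ :=
          integral_finset_sum _ fun k _ => (hintk k).abs
      _ = ∑ k ∈ Finset.range (2 ^ (m+1)), |c k| * ∫ x, |haarFn μ (m+1) k x| ∂μ := by
          refine Finset.sum_congr rfl fun k _ => ?_
          simp_rw [abs_mul]
          rw [integral_const_mul]
  -- step 2 : per-term bound
  have step2 : ∀ k ∈ Finset.range (2 ^ (m+1)),
      |c k| * ∫ x, |haarFn μ (m+1) k x| ∂μ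
        ≤ 2 * Real.sqrt C * ∫ y in dyadicI m (k / 2), |w y| ∂μ := by
    intro k hk
    rw [Finset.mem_range] at hk
    have hk2 : k / 2 < 2 ^ m := hdiv k hk
    have h2k : 2 * (k / 2) < 2 ^ (m + 1) := by
      have : 2 ^ (m + 1) = 2 ^ m * 2 := by rw [pow_succ]
      omega
    have h2k1 : 2 * (k / 2) + 1 < 2 ^ (m + 1) := by
      have : 2 ^ (m + 1) = 2 ^ m * 2 := by rw [pow_succ]
      omega
    have h2kk : 2 * k < 2 ^ (m + 2) := by
      have : 2 ^ (m + 2) = 2 ^ (m+1) * 2 := by rw [pow_succ]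
      omega
    have h2kk1 : 2 * k + 1 < 2 ^ (m + 2) := by
      have : 2 ^ (m + 2) = 2 ^ (m+1) * 2 := by rw [pow_succ]
      omega
    have hm0 : 0 < mval μ m (k / 2) := by
      rw [mval]
      have := hposR (m+1) (2*(k/2)) h2k
      have := hposR (m+1) (2*(k/2)+1) h2k1
      have := hposR m (k/2) hk2
      positivity
    have hsq0 : 0 < Real.sqrt (mval μ m (k/2)) := Real.sqrt_pos.mpr hm0
    have hX : 0 ≤ ∫ y in dyadicI m (k / 2), |w y| ∂μ :=
      setIntegral_nonneg (dyadicI_meas _ _) fun _ _ => abs_nonneg _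
    -- |c k| = |coef|
    have hck : |c k| = |∫ y, w y * haarFn μ m (k / 2) y ∂μ| := by
      by_cases h : k % 2 = 0 <;> simp [hc, h, abs_mul]
    have hcoef : |c k| ≤ (Real.sqrt (mval μ m (k/2)))⁻¹ * ∫ y in dyadicI m (k / 2), |w y| ∂μ := by
      rw [hck]
      exact coef_bound μ m (k/2) w hw (hposR m (k/2) hk2) (hposR (m+1) _ h2k)
        (hposR (m+1) _ h2k1)
        (haarFn_abs_le μ m (k/2) (hposR m (k/2) hk2) (hposR (m+1) _ h2k) (hposR (m+1) _ h2k1))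
    have hL1 : ∫ x, |haarFn μ (m+1) k x| ∂μ ≤ 2 * Real.sqrt (mval μ (m+1) k) :=
      haarFn_L1 μ (m+1) k (hposR (m+2) _ h2kk) (hposR (m+2) _ h2kk1)
    have hsqle : Real.sqrt (mval μ (m+1) k) ≤ Real.sqrt C * Real.sqrt (mval μ m (k/2)) := by
      rw [← Real.sqrt_mul hC.le]
      exact Real.sqrt_le_sqrt (hincr m k hk)
    calc |c k| * ∫ x, |haarFn μ (m+1) k x| ∂μ
        ≤ ((Real.sqrt (mval μ m (k/2)))⁻¹ * ∫ y in dyadicI m (k / 2), |w y| ∂μ)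
            * (2 * Real.sqrt (mval μ (m+1) k)) := by
          apply mul_le_mul hcoef hL1 (integral_nonneg fun x => abs_nonneg _) (by positivity)
      _ ≤ ((Real.sqrt (mval μ m (k/2)))⁻¹ * ∫ y in dyadicI m (k / 2), |w y| ∂μ)
            * (2 * (Real.sqrt C * Real.sqrt (mval μ m (k/2)))) :=
          mul_le_mul_of_nonneg_left (mul_le_mul_of_nonneg_left hsqle (by norm_num))
            (mul_nonneg (by positivity) hX)
      _ = (2 * Real.sqrt C * ∫ y in dyadicI m (k / 2), |w y| ∂μ)
            * ((Real.sqrt (mval μ m (k/2)))⁻¹ * Real.sqrt (mval μ m (k/2))) := by ring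
      _ = 2 * Real.sqrt C * ∫ y in dyadicI m (k / 2), |w y| ∂μ := by
          rw [inv_mul_cancel₀ hsq0.ne', mul_one]
  -- combine
  calc ∫ x, |∑ k ∈ Finset.range (2 ^ (m+1)), c k * haarFn μ (m+1) k x| ∂μ
      ≤ ∑ k ∈ Finset.range (2 ^ (m+1)), |c k| * ∫ x, |haarFn μ (m+1) k x| ∂μ := step1
    _ ≤ ∑ k ∈ Finset.range (2 ^ (m+1)),
          2 * Real.sqrt C * ∫ y in dyadicI m (k / 2), |w y| ∂μ :=
        Finset.sum_le_sum step2
    _ = 2 * Real.sqrt C * ∑ k ∈ Finset.range (2 ^ (m+1)),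
          ∫ y in dyadicI m (k / 2), |w y| ∂μ := by rw [Finset.mul_sum]
    _ = 2 * Real.sqrt C * (2 * ∑ j ∈ Finset.range (2 ^ m),
          ∫ y in dyadicI m j, |w y| ∂μ) := by
        rw [show (2:ℕ) ^ (m+1) = 2 * 2 ^ m by rw [pow_succ]; ring]
        congr 1
        exact sum_halve (2 ^ m) fun j => ∫ y in dyadicI m j, |w y| ∂μ
    _ ≤ 2 * Real.sqrt C * (2 * ∫ x, |w x| ∂μ) :=
        mul_le_mul_of_nonneg_left (mul_le_mul_of_nonneg_left
          (sum_setIntegral_le μ m (2 ^ m) w hw) (by norm_num)) (by positivity)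
    _ = 4 * Real.sqrt C * ∫ x, |w x| ∂μ := by ring
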